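/- Let n ≥ 1 and α/n > 1/2. Any solution v > 0 of the Gauss curvature power translator ODE v' = r^{n-1}(1+v²)^{(n+2)/2 - n/(2α)}/v^{n-1} with v(r₀) = v₀ > 0 blows up in finite r: there exists R < ∞ such that v(r) → ∞ as r → R⁻. -/

import Mathlib

/-- Supercritical Gauss curvature power flows (α/n > 1/2): positive solutions of the
translator ODE blow up in finite r, i.e. no global positive solution exists. -/
theorem stmt11 (n : ℕ) (hn : 1 ≤ n) (α : ℝ) (hα : 1 / 2 < α / n)
    (r₀ v₀ : ℝ) (hr₀ : 0 < r₀) (hv₀ : 0 < v₀) (v : ℝ → ℝ) (hv0 : v r₀ = v₀)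
    (hpos : ∀ r ∈ Set.Ici r₀, 0 < v r)
    (hode : ∀ r ∈ Set.Ici r₀,
      HasDerivAt v
        (r ^ (n - 1) * (1 + (v r) ^ 2) ^ (((n : ℝ) + 2) / 2 - (n : ℝ) / (2 * α)) /
          (v r) ^ (n - 1)) r) :
    False := by
  have hn' : (1:ℝ) ≤ (n:ℝ) := by exact_mod_cast hn
  have hnpos : (0:ℝ) < (n:ℝ) := by linarith
  have hαpos : 0 < α := by
    have h := (lt_div_iff₀ hnpos).mp hα
    linarith
  have hna : (n:ℝ)/α < 2 := by
    rw [div_lt_iff₀ hαpos]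
    have h := (lt_div_iff₀ hnpos).mp hα
    linarith
  have hnanonneg : 0 < (n:ℝ)/α := div_pos hnpos hαpos
  set p : ℝ := ((n : ℝ) + 2) / 2 - (n : ℝ) / (2 * α) with hp_def
  have hp : 0 < p := by
    have : (n:ℝ) / (2*α) = ((n:ℝ)/α)/2 := by ring
    rw [hp_def, this]
    linarith
  set θ : ℝ := 3 - (n:ℝ)/α with hθ_def
  have hθ : 1 < θ := by rw [hθ_def]; linarith
  have h2p : 2 * p = θ + ((n:ℝ) - 1) := by
    rw [hp_def, hθ_def]
    field_simp
    ring
  have hcast : ((n - 1 : ℕ) : ℝ) = (n:ℝ) - 1 := by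
    rw [Nat.cast_sub hn]; norm_num
  set c : ℝ := r₀ ^ (n-1) with hc_def
  have hcpos : 0 < c := pow_pos hr₀ _
  -- the derivative lower bound
  have hkey : ∀ r ∈ Set.Ici r₀,
      c * (v r) ^ θ ≤ r ^ (n - 1) * (1 + (v r) ^ 2) ^ p / (v r) ^ (n - 1) := by
    intro r hr
    have hV : 0 < v r := hpos r hr
    have hrn : c ≤ r ^ (n-1) := pow_le_pow_left₀ hr₀.le hr _
    have h1 : (v r ^ 2 : ℝ) ^ p ≤ (1 + v r ^ 2) ^ p :=
      Real.rpow_le_rpow (sq_nonneg _) (by linarith) hp.le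
    have h2 : (v r ^ 2 : ℝ) ^ p = v r ^ (2 * p) := by
      rw [← Real.rpow_natCast (v r) 2, ← Real.rpow_mul hV.le]
      norm_num
    have h3 : v r ^ (2 * p) = v r ^ θ * (v r) ^ (n - 1) := by
      rw [h2p, Real.rpow_add hV, ← hcast, Real.rpow_natCast]
    have h4 : c * (v r ^ θ * (v r) ^ (n-1)) ≤ r ^ (n-1) * (1 + v r ^ 2) ^ p := by
      have := h1
      rw [h2, h3] at this
      have hVpow : (0:ℝ) < v r ^ θ * (v r) ^ (n-1) :=
        mul_pos (Real.rpow_pos_of_pos hV _) (pow_pos hV _)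
      calc c * (v r ^ θ * (v r) ^ (n-1)) ≤ r ^ (n-1) * (v r ^ θ * (v r) ^ (n-1)) := by
            exact mul_le_mul_of_nonneg_right hrn hVpow.le
        _ ≤ r ^ (n-1) * (1 + v r ^ 2) ^ p := by
            apply mul_le_mul_of_nonneg_left this
            exact (pow_pos (lt_of_lt_of_le hr₀ hr) _).le
    rw [le_div_iff₀ (pow_pos hV _)]
    calc c * v r ^ θ * (v r) ^ (n-1) = c * (v r ^ θ * (v r) ^ (n-1)) := by ring
      _ ≤ r ^ (n-1) * (1 + v r ^ 2) ^ p := h4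
  -- w := v ^ (1 - θ)
  set w : ℝ → ℝ := fun r => v r ^ (1 - θ) with hw_def
  set K : ℝ := c * (1 - θ) with hK_def
  have hKneg : K < 0 := mul_neg_of_pos_of_neg hcpos (by linarith)
  have hw' : ∀ r ∈ Set.Ici r₀,
      HasDerivAt w
        ((r ^ (n - 1) * (1 + (v r) ^ 2) ^ p / (v r) ^ (n - 1)) * (1 - θ)
          * v r ^ (1 - θ - 1)) r := by
    intro r hr
    exact (hode r hr).rpow_const (Or.inl (hpos r hr).ne')
  have hwbound : ∀ r ∈ Set.Ici r₀,
      (r ^ (n - 1) * (1 + (v r) ^ 2) ^ p / (v r) ^ (n - 1)) * (1 - θ)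
          * v r ^ (1 - θ - 1) ≤ K := by
    intro r hr
    have hV : 0 < v r := hpos r hr
    have hm : (1 - θ) * v r ^ (1 - θ - 1) ≤ 0 :=
      mul_nonpos_of_nonpos_of_nonneg (by linarith) (Real.rpow_pos_of_pos hV _).le
    have := mul_le_mul_of_nonpos_right (hkey r hr) hm
    calc (r ^ (n - 1) * (1 + (v r) ^ 2) ^ p / (v r) ^ (n - 1)) * (1 - θ)
          * v r ^ (1 - θ - 1)
        = (r ^ (n - 1) * (1 + (v r) ^ 2) ^ p / (v r) ^ (n - 1))
            * ((1 - θ) * v r ^ (1 - θ - 1)) := by ring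
      _ ≤ c * v r ^ θ * ((1 - θ) * v r ^ (1 - θ - 1)) := this
      _ = c * (1 - θ) * (v r ^ θ * v r ^ (1 - θ - 1)) := by ring
      _ = K := by
          rw [← Real.rpow_add hV]
          norm_num [hK_def]
  -- g := K * r - w r is monotone on Ici r₀
  set g : ℝ → ℝ := fun r => K * r - w r with hg_def
  have hg' : ∀ r ∈ Set.Ici r₀,
      HasDerivAt g (K - (r ^ (n - 1) * (1 + (v r) ^ 2) ^ p / (v r) ^ (n - 1)) * (1 - θ)
          * v r ^ (1 - θ - 1)) r := by
    intro r hr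
    have h := ((hasDerivAt_id r).const_mul K).sub (hw' r hr)
    exact h.congr_deriv (by ring)
  have hmono : MonotoneOn g (Set.Ici r₀) := by
    apply monotoneOn_of_deriv_nonneg (convex_Ici r₀)
    · intro r hr
      exact ((hg' r hr).continuousAt).continuousWithinAt
    · intro r hr
      rw [interior_Ici] at hr
      exact (hg' r (Set.mem_Ici.mpr (le_of_lt (Set.mem_Ioi.mp hr)))).differentiableAt.differentiableWithinAt
    · intro r hr
      rw [interior_Ici] at hr
      rw [(hg' r (Set.mem_Ici.mpr (le_of_lt (Set.mem_Ioi.mp hr)))).deriv]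
      have := hwbound r (Set.mem_Ici.mpr (le_of_lt (Set.mem_Ioi.mp hr)))
      linarith
  -- choose R large enough
  set R : ℝ := r₀ + (w r₀ + 1) / (-K) with hR_def
  have hwr₀ : 0 < w r₀ := Real.rpow_pos_of_pos (hpos r₀ (Set.mem_Ici.mpr le_rfl)) _
  have hRge : r₀ ≤ R := by
    have h : 0 < (w r₀ + 1) / (-K) := div_pos (by linarith) (by linarith)
    rw [hR_def]; linarith
  have hgle := hmono (Set.mem_Ici.mpr le_rfl) hRge hRge
  have hwR : 0 < w R := Real.rpow_pos_of_pos (hpos R hRge) _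
  have hKne : K ≠ 0 := ne_of_lt hKneg
  have hKR : K * (R - r₀) = -(w r₀ + 1) := by
    have h := div_mul_cancel₀ (w r₀ + 1) (neg_ne_zero.mpr hKne)
    rw [hR_def]
    linear_combination (-1 : ℝ) * h
  simp only [hg_def] at hgle
  nlinarith [hgle, hKR, hwR]
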